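/- Let M be a real symmetric n×n matrix with spectral projections E_θ, and a, b distinct indices. Then a and b are strongly cospectral if and only if a and b are cospectral and every pole of the rational function λ ↦ p(M\{a,b}, λ)/p(M, λ) is simple (has multiplicity one). -/

import Mathlib

open Matrix Polynomial

noncomputable def Mdel {n : ℕ} (M : Matrix (Fin n) (Fin n) ℝ) (a : Fin n) :
    Matrix {i : Fin n // i ≠ a} {i : Fin n // i ≠ a} ℝ :=
  M.submatrix Subtype.val Subtype.val

/-- `M \ {a,b}`. -/
noncomputable def Mdel2 {n : ℕ} (M : Matrix (Fin n) (Fin n) ℝ) (a b : Fin n) :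
    Matrix {i : Fin n // ¬ (i = a ∨ i = b)} {i : Fin n // ¬ (i = a ∨ i = b)} ℝ :=
  M.submatrix Subtype.val Subtype.val


lemma eval_charpoly' {n : Type*} [Fintype n] [DecidableEq n] (M : Matrix n n ℝ) (x : ℝ) :
    eval x M.charpoly = det (x • (1 : Matrix n n ℝ) - M) := by
  rw [Matrix.charpoly, ← Polynomial.coe_evalRingHom, RingHom.map_det]
  congr 1
  ext i j
  by_cases h : i = j
  · subst h; simp [charmatrix_apply_eq, Matrix.one_apply]
  · simp [charmatrix_apply_ne _ _ _ h, Matrix.one_apply_ne h]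

lemma det_compl_block {n : ℕ} (p : Fin n → Prop) [DecidablePred p]
    (N : Matrix (Fin n) (Fin n) ℝ) (h1 : IsUnit N.det)
    (h2 : IsUnit ((N.submatrix (Subtype.val : {i // ¬ p i} → Fin n) Subtype.val)).det) :
    (N.submatrix (Subtype.val : {i // ¬ p i} → Fin n) Subtype.val).det
      = N.det * ((N⁻¹).submatrix (Subtype.val : {i // p i} → Fin n) Subtype.val).det := by
  classical
  set e : ({i // ¬ p i} ⊕ {i // p i}) ≃ Fin n :=
    (Equiv.sumComm _ _).trans (Equiv.sumCompl p) with he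
  have hval : ∀ (x : {i // ¬ p i} ⊕ {i // p i}), e x = Sum.elim Subtype.val Subtype.val x := by
    rintro (x | x) <;> rfl
  set P := N.submatrix (Subtype.val : {i // ¬ p i} → Fin n) Subtype.val with hPd
  set Q := N.submatrix (Subtype.val : {i // ¬ p i} → Fin n) (Subtype.val : {i // p i} → Fin n) with hQd
  set R := N.submatrix (Subtype.val : {i // p i} → Fin n) (Subtype.val : {i // ¬ p i} → Fin n) with hRd
  set T := N.submatrix (Subtype.val : {i // p i} → Fin n) (Subtype.val : {i // p i} → Fin n) with hTd
  have hblk : N.submatrix e e = fromBlocks P Q R T := by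
    ext (i | i) (j | j) <;>
      simp [hval, fromBlocks, Matrix.submatrix_apply, hPd, hQd, hRd, hTd]
  haveI iP : Invertible P := Matrix.invertibleOfIsUnitDet _ h2
  have hdet : N.det = P.det * (T - R * ⅟P * Q).det := by
    rw [← Matrix.det_submatrix_equiv_self e N, hblk, Matrix.det_fromBlocks₁₁]
  set S := T - R * ⅟P * Q with hSd
  have hTschur : IsUnit S.det := by
    rw [isUnit_iff_ne_zero]
    intro h0
    rw [hdet, h0, mul_zero] at h1
    exact (isUnit_iff_ne_zero.mp h1) rfl
  haveI iS : Invertible S := Matrix.invertibleOfIsUnitDet _ hTschur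
  haveI iN' : Invertible (N.submatrix e e) :=
    Matrix.invertibleOfIsUnitDet _ (by rwa [Matrix.det_submatrix_equiv_self e N])
  haveI iF : Invertible (fromBlocks P Q R T) := by rw [← hblk]; infer_instance
  have hinvblk : (fromBlocks P Q R T)⁻¹ =
      fromBlocks (⅟P + ⅟P * Q * ⅟S * R * ⅟P) (-(⅟P * Q * ⅟S))
        (-(⅟S * R * ⅟P)) (⅟S) := by
    rw [← Matrix.invOf_eq_nonsing_inv]
    exact Matrix.invOf_fromBlocks₁₁_eq P Q R T
  have hsub : (N.submatrix e e)⁻¹ = (N⁻¹).submatrix e e := by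
    apply Matrix.inv_eq_right_inv
    rw [Matrix.submatrix_mul_equiv N N⁻¹ _ e _, Matrix.mul_nonsing_inv _ h1,
      Matrix.submatrix_one_equiv]
  have hblock22 : (N⁻¹).submatrix (Subtype.val : {i // p i} → Fin n) Subtype.val = ⅟S := by
    ext i j
    have h4 : (N⁻¹).submatrix e e (Sum.inr i) (Sum.inr j)
        = (fromBlocks P Q R T)⁻¹ (Sum.inr i) (Sum.inr j) := by
      rw [← hsub, hblk]
    rw [hinvblk] at h4
    simpa [hval, Matrix.submatrix_apply, fromBlocks] using h4
  rw [hblock22, Matrix.invOf_eq_nonsing_inv, Matrix.det_nonsing_inv, Ring.inverse_eq_inv', hdet,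
    mul_assoc, mul_inv_cancel₀ (isUnit_iff_ne_zero.mp hTschur), mul_one]

lemma det_subtype_single {n : ℕ} (a : Fin n)
    {ft : Fintype {i : Fin n // (fun i => i = a) i}}
    {de : DecidableEq {i : Fin n // (fun i => i = a) i}}
    (A : Matrix {i : Fin n // (fun i => i = a) i} {i : Fin n // (fun i => i = a) i} ℝ) :
    @det _ de ft ℝ _ A = A ⟨a, rfl⟩ ⟨a, rfl⟩ := by
  haveI : Subsingleton {i : Fin n // (fun i => i = a) i} :=
    ⟨fun x y => Subtype.ext (x.2.trans y.2.symm)⟩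
  exact Matrix.det_eq_elem_of_subsingleton _ _

lemma det_subtype_pair {n : ℕ} (a b : Fin n) (hab : a ≠ b)
    {ft : Fintype {i : Fin n // (fun i => i = a ∨ i = b) i}}
    {de : DecidableEq {i : Fin n // (fun i => i = a ∨ i = b) i}}
    (A : Matrix {i : Fin n // (fun i => i = a ∨ i = b) i}
      {i : Fin n // (fun i => i = a ∨ i = b) i} ℝ) :
    @det _ de ft ℝ _ A = A ⟨a, Or.inl rfl⟩ ⟨a, Or.inl rfl⟩ * A ⟨b, Or.inr rfl⟩ ⟨b, Or.inr rfl⟩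
      - A ⟨a, Or.inl rfl⟩ ⟨b, Or.inr rfl⟩ * A ⟨b, Or.inr rfl⟩ ⟨a, Or.inl rfl⟩ := by
  set f : Fin 2 → {i : Fin n // (fun i => i = a ∨ i = b) i} :=
    ![⟨a, Or.inl rfl⟩, ⟨b, Or.inr rfl⟩] with hf
  have hbij : Function.Bijective f := by
    constructor
    · intro x y hxy
      fin_cases x <;> fin_cases y <;> simp_all [hf]
    · rintro ⟨i, hi | hi⟩
      · exact ⟨0, by simp [hf, hi]⟩
      · exact ⟨1, by simp [hf, hi]⟩
  rw [← Matrix.det_submatrix_equiv_self (Equiv.ofBijective f hbij), Matrix.det_fin_two]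
  simp [Equiv.ofBijective, hf, Matrix.submatrix_apply]

lemma det_del1 {n : ℕ} (N : Matrix (Fin n) (Fin n) ℝ) (a : Fin n)
    (h1 : IsUnit N.det) (h2 : IsUnit (Mdel N a).det) :
    (Mdel N a).det = N.det * N⁻¹ a a := by
  classical
  have h0 := det_compl_block (fun i => i = a) N h1 h2
  refine Eq.trans h0 ?_
  congr 1
  haveI : Subsingleton {i : Fin n // (fun i => i = a) i} :=
    ⟨fun x y => Subtype.ext (x.2.trans y.2.symm)⟩
  exact det_subtype_single a _

lemma det_del2 {n : ℕ} (N : Matrix (Fin n) (Fin n) ℝ) (a b : Fin n) (hab : a ≠ b)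
    (h1 : IsUnit N.det) (h2 : IsUnit (Mdel2 N a b).det) :
    (Mdel2 N a b).det = N.det * (N⁻¹ a a * N⁻¹ b b - N⁻¹ a b * N⁻¹ b a) := by
  classical
  have h0 := det_compl_block (fun i => i = a ∨ i = b) N h1 h2
  refine Eq.trans h0 ?_
  congr 1
  exact det_subtype_pair a b hab _

lemma resolventSum {n : ℕ} (M : Matrix (Fin n) (Fin n) ℝ)
    (Θ : Finset ℝ) (E : ℝ → Matrix (Fin n) (Fin n) ℝ)
    (hdecomp : M = ∑ θ ∈ Θ, θ • E θ)
    (hsum : ∑ θ ∈ Θ, E θ = 1)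
    (hidem : ∀ θ ∈ Θ, E θ * E θ = E θ)
    (horth : ∀ θ ∈ Θ, ∀ η ∈ Θ, θ ≠ η → E θ * E η = 0)
    (lam : ℝ) (hl : ∀ θ ∈ Θ, lam ≠ θ) :
    (lam • (1 : Matrix (Fin n) (Fin n) ℝ) - M) * (∑ θ ∈ Θ, (lam - θ)⁻¹ • E θ) = 1 := by
  rw [Finset.mul_sum]
  have key : ∀ θ ∈ Θ, (lam • (1 : Matrix (Fin n) (Fin n) ℝ) - M) * ((lam - θ)⁻¹ • E θ)
      = E θ := by
    intro θ hθ
    have hM : M * E θ = θ • E θ := by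
      rw [hdecomp, Finset.sum_mul, Finset.sum_eq_single θ]
      · rw [smul_mul_assoc, hidem θ hθ]
      · intro η hη hne
        rw [smul_mul_assoc, horth η hη θ hθ hne, smul_zero]
      · intro h; exact absurd hθ h
    rw [Matrix.mul_smul, sub_mul, Matrix.smul_mul, Matrix.one_mul, hM, ← sub_smul, smul_smul,
      inv_mul_cancel₀ (sub_ne_zero.mpr (hl θ hθ)), one_smul]
  rw [Finset.sum_congr rfl key, hsum]

lemma sc_pointwise {n : ℕ} (F : Matrix (Fin n) (Fin n) ℝ) (hs : F.IsSymm) (hi : F * F = F)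
    (a b : Fin n) :
    (∃ ε : ℝ, (ε = 1 ∨ ε = -1) ∧ F *ᵥ Pi.single a 1 = ε • (F *ᵥ Pi.single b 1)) ↔
      (F a a = F b b ∧ F a a * F b b = F a b * F a b) := by
  classical
  set x : Fin n → ℝ := F *ᵥ Pi.single a 1 with hx
  set y : Fin n → ℝ := F *ᵥ Pi.single b 1 with hy
  have hdot : ∀ (i j : Fin n), (F *ᵥ Pi.single i 1) ⬝ᵥ (F *ᵥ Pi.single j 1) = F i j := by
    intro i j
    have : ∀ k, (F *ᵥ Pi.single i 1) k = F k i := by intro k; simp [Matrix.mulVec_single]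
    have h2 : ∀ k, (F *ᵥ Pi.single j 1) k = F k j := by intro k; simp [Matrix.mulVec_single]
    have : (F *ᵥ Pi.single i 1) ⬝ᵥ (F *ᵥ Pi.single j 1) = ∑ k, F k i * F k j := by
      simp [dotProduct, this, h2]
    rw [this]
    have : ∑ k, F k i * F k j = (F * F) i j := by
      rw [Matrix.mul_apply]
      exact Finset.sum_congr rfl fun k _ => by rw [hs.apply i k]
    rw [this, hi]
  have hxx : x ⬝ᵥ x = F a a := hdot a a
  have hyy : y ⬝ᵥ y = F b b := hdot b b
  have hxy : x ⬝ᵥ y = F a b := hdot a b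
  constructor
  · rintro ⟨ε, hε, h⟩
    have hε2 : ε * ε = 1 := by rcases hε with h1 | h1 <;> rw [h1] <;> norm_num
    have h1 : F a a = F b b := by
      rw [← hxx, ← hyy, h, smul_dotProduct, dotProduct_smul, smul_eq_mul, smul_eq_mul,
        ← mul_assoc, hε2, one_mul]
    have h2 : F a b = ε * F b b := by
      rw [← hxy, ← hyy, h, smul_dotProduct, smul_eq_mul]
    refine ⟨h1, ?_⟩
    rw [h1, h2]; ring_nf; rw [sq ε, hε2, mul_one]
  · rintro ⟨h1, h2⟩
    set ε : ℝ := if 0 ≤ F a b then 1 else -1 with hε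
    refine ⟨ε, by by_cases h : 0 ≤ F a b <;> simp [hε, h], ?_⟩
    have haa : 0 ≤ F a a := by
      rw [← hxx]; exact Finset.sum_nonneg fun k _ => mul_self_nonneg _
    have hsq : F a a * F a a = F a b * F a b := by
      rw [h1] at h2 ⊢; exact h2
    have hcase : F a b = ε * F a a := by
      rcases mul_self_eq_mul_self_iff.mp hsq.symm with h | h
      · -- F a b = F a a
        by_cases hpos : 0 ≤ F a b
        · rw [hε, if_pos hpos, one_mul]; exact h
        · push_neg at hpos
          have : F a b = -F a a := by nlinarith
          rw [hε, if_neg (not_le.mpr hpos)]; linarith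
      · -- F a b = -F a a
        by_cases hpos : 0 ≤ F a b
        · have : F a b = F a a := by nlinarith
          rw [hε, if_pos hpos, one_mul]; exact this
        · rw [hε, if_neg hpos]; linarith
    have hyx : y ⬝ᵥ x = F a b := by rw [dotProduct_comm]; exact hxy
    have hε2 : ε * ε = 1 := by by_cases h : 0 ≤ F a b <;> simp [hε, h]
    have expand : (x - ε • y) ⬝ᵥ (x - ε • y)
        = x ⬝ᵥ x - ε * (x ⬝ᵥ y) - ε * (y ⬝ᵥ x) + ε * ε * (y ⬝ᵥ y) := by
      simp only [sub_dotProduct, dotProduct_sub, smul_dotProduct, dotProduct_smul, smul_eq_mul]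
      ring
    have hnorm : (x - ε • y) ⬝ᵥ (x - ε • y) = 0 := by
      rw [expand, hxx, hxy, hyx, hyy, hε2, hcase, ← h1]
      ring_nf
      rw [sq ε, hε2]
      ring
    have := dotProduct_self_eq_zero.mp hnorm
    rw [sub_eq_zero] at this
    exact this

/-- For a real symmetric matrix `M` with spectral projections `E θ`, distinct indices
`a, b` are strongly cospectral iff they are cospectral and every pole of the rational
function `p(M\{a,b}, λ)/p(M, λ)` is simple, i.e. for every `z` the multiplicity of `z` as
a root of `char(M)` exceeds its multiplicity as a root of `char(M\{a,b})` by at most one. -/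
theorem stronglyCospectral_iff_simple_poles {n : ℕ}
    (M : Matrix (Fin n) (Fin n) ℝ) (hM : M.IsSymm)
    (Θ : Finset ℝ) (E : ℝ → Matrix (Fin n) (Fin n) ℝ)
    (hdecomp : M = ∑ θ ∈ Θ, θ • E θ)
    (hsum : ∑ θ ∈ Θ, E θ = 1)
    (hsymm : ∀ θ ∈ Θ, (E θ).IsSymm)
    (hidem : ∀ θ ∈ Θ, E θ * E θ = E θ)
    (horth : ∀ θ ∈ Θ, ∀ η ∈ Θ, θ ≠ η → E θ * E η = 0)
    (a b : Fin n) (hab : a ≠ b) :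
    (∀ θ ∈ Θ, ∃ ε : ℝ, (ε = 1 ∨ ε = -1) ∧
        E θ *ᵥ Pi.single a 1 = ε • (E θ *ᵥ Pi.single b 1)) ↔
      ((Mdel M a).charpoly = (Mdel M b).charpoly ∧
        ∀ z : ℝ, (M.charpoly).rootMultiplicity z
          ≤ (Mdel2 M a b).charpoly.rootMultiplicity z + 1) := by
  classical
  set u : ℝ → ℝ := fun θ => E θ a a with hu
  set v : ℝ → ℝ := fun θ => E θ b b with hv
  set w : ℝ → ℝ := fun θ => E θ a b with hw
  set ρ : ℝ[X] := ∏ θ ∈ Θ, (X - C θ) with hρdef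
  set P : (ℝ → ℝ) → ℝ[X] :=
    fun c => ∑ θ ∈ Θ, C (c θ) * ∏ η ∈ Θ.erase θ, (X - C η) with hPdef
  set φ := M.charpoly with hφdef
  set φa := (Mdel M a).charpoly with hφadef
  set φb := (Mdel M b).charpoly with hφbdef
  set φab := (Mdel2 M a b).charpoly with hφabdef
  have hφ0 : φ ≠ 0 := (Matrix.charpoly_monic M).ne_zero
  have hφa0 : φa ≠ 0 := (Matrix.charpoly_monic _).ne_zero
  have hφb0 : φb ≠ 0 := (Matrix.charpoly_monic _).ne_zero
  have hφab0 : φab ≠ 0 := (Matrix.charpoly_monic _).ne_zero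
  have hρ0 : ρ ≠ 0 :=
    (monic_prod_of_monic _ _ fun θ _ => monic_X_sub_C θ).ne_zero
  -- the good set
  set bad : ℝ[X] := φ * (φa * (φb * (φab * ρ))) with hbaddef
  have hbad0 : bad ≠ 0 :=
    mul_ne_zero hφ0 (mul_ne_zero hφa0 (mul_ne_zero hφb0 (mul_ne_zero hφab0 hρ0)))
  set G : Set ℝ := {x | IsRoot bad x}ᶜ with hGdef
  have hGinf : G.Infinite := (Polynomial.finite_setOf_isRoot hbad0).infinite_compl
  have hGprop : ∀ lam ∈ G, eval lam φ ≠ 0 ∧ eval lam φa ≠ 0 ∧ eval lam φb ≠ 0 ∧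
      eval lam φab ≠ 0 ∧ ∀ θ ∈ Θ, lam ≠ θ := by
    intro lam hlam
    have h0 : ¬ (eval lam φ * (eval lam φa * (eval lam φb * (eval lam φab * eval lam ρ))) = 0) := by
      intro hc
      exact hlam (by simpa [hbaddef, IsRoot] using hc)
    simp only [mul_eq_zero, not_or] at h0
    obtain ⟨h1, h2, h3, h4, h5⟩ := h0
    refine ⟨h1, h2, h3, h4, fun θ hθ heq => h5 ?_⟩
    rw [hρdef, eval_prod]
    exact Finset.prod_eq_zero hθ (by simp [heq])
  -- collapsing partial fractions
  have collapse : ∀ (c : ℝ → ℝ) (lam : ℝ), (∀ θ ∈ Θ, lam ≠ θ) →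
      (∑ θ ∈ Θ, (lam - θ)⁻¹ * c θ) * eval lam ρ = eval lam (P c) := by
    intro c lam hl
    rw [hPdef, eval_finset_sum, Finset.sum_mul]
    refine Finset.sum_congr rfl fun θ hθ => ?_
    have hne : lam - θ ≠ 0 := sub_ne_zero.mpr (hl θ hθ)
    rw [eval_mul, eval_C, hρdef, eval_prod]
    simp only [eval_sub, eval_X, eval_C]
    rw [← Finset.mul_prod_erase Θ (fun η => lam - η) hθ, eval_prod]
    simp only [eval_sub, eval_X, eval_C]
    field_simp
  -- evaluation of P c at a point of Θ
  have evalP : ∀ (c : ℝ → ℝ), ∀ θ₀ ∈ Θ,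
      eval θ₀ (P c) = c θ₀ * ∏ η ∈ Θ.erase θ₀, (θ₀ - η) := by
    intro c θ₀ h0
    rw [hPdef, eval_finset_sum, Finset.sum_eq_single θ₀]
    · simp [eval_prod]
    · intro θ hθ hne
      rw [eval_mul]
      have hz : eval θ₀ (∏ η ∈ Θ.erase θ, (X - C η)) = 0 := by
        rw [eval_prod]
        exact Finset.prod_eq_zero (Finset.mem_erase.mpr ⟨Ne.symm hne, h0⟩) (by simp)
      rw [hz, mul_zero]
    · intro h; exact absurd h0 h
  have hρerase : ∀ θ₀ ∈ Θ, (∏ η ∈ Θ.erase θ₀, (θ₀ - η)) ≠ 0 := by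
    intro θ₀ h0
    exact Finset.prod_ne_zero_iff.mpr fun η hη =>
      sub_ne_zero.mpr fun hc => (Finset.mem_erase.mp hη).1 hc.symm
  -- key evaluation identities on G
  have key : ∀ lam ∈ G,
      (eval lam (φa * ρ) = eval lam (φ * P u)) ∧
      (eval lam (φb * ρ) = eval lam (φ * P v)) ∧
      (eval lam (φab * (ρ * ρ)) = eval lam (φ * (P u * P v - P w * P w))) := by
    intro lam hlam
    obtain ⟨h1, h2, h3, h4, h5⟩ := hGprop lam hlam
    set N : Matrix (Fin n) (Fin n) ℝ := lam • (1 : Matrix (Fin n) (Fin n) ℝ) - M with hNdef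
    have hNdet : N.det = eval lam φ := (eval_charpoly' M lam).symm
    have hMa : Mdel N a = lam • (1 : Matrix _ _ ℝ) - Mdel M a := by
      ext i j
      simp [Mdel, hNdef, Matrix.submatrix_apply, Matrix.sub_apply, Matrix.smul_apply,
        Matrix.one_apply, Subtype.ext_iff]
    have hMb : Mdel N b = lam • (1 : Matrix _ _ ℝ) - Mdel M b := by
      ext i j
      simp [Mdel, hNdef, Matrix.submatrix_apply, Matrix.sub_apply, Matrix.smul_apply,
        Matrix.one_apply, Subtype.ext_iff]
    have hMab : Mdel2 N a b = lam • (1 : Matrix _ _ ℝ) - Mdel2 M a b := by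
      ext i j
      simp [Mdel2, hNdef, Matrix.submatrix_apply, Matrix.sub_apply, Matrix.smul_apply,
        Matrix.one_apply, Subtype.ext_iff]
    have hdeta : (Mdel N a).det = eval lam φa := by
      rw [hMa, hφadef]; exact (eval_charpoly' (Mdel M a) lam).symm
    have hdetb : (Mdel N b).det = eval lam φb := by
      rw [hMb, hφbdef]; exact (eval_charpoly' (Mdel M b) lam).symm
    have hdetab : (Mdel2 N a b).det = eval lam φab := by
      rw [hMab, hφabdef]; exact (eval_charpoly' (Mdel2 M a b) lam).symm
    have hinv : N⁻¹ = ∑ θ ∈ Θ, (lam - θ)⁻¹ • E θ :=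
      Matrix.inv_eq_right_inv (resolventSum M Θ E hdecomp hsum hidem horth lam h5)
    have hentry : ∀ i j : Fin n, N⁻¹ i j = ∑ θ ∈ Θ, (lam - θ)⁻¹ * E θ i j := by
      intro i j
      rw [hinv]
      simp [Matrix.sum_apply, Matrix.smul_apply, smul_eq_mul]
    have hba : ∀ θ ∈ Θ, E θ b a = E θ a b := fun θ hθ => (hsymm θ hθ).apply a b
    have hUa : IsUnit N.det := isUnit_iff_ne_zero.mpr (by rw [hNdet]; exact h1)
    -- first identity
    have k1 : eval lam (φa * ρ) = eval lam (φ * P u) := by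
      rw [eval_mul, eval_mul, ← hdeta,
        det_del1 N a hUa (isUnit_iff_ne_zero.mpr (by rw [hdeta]; exact h2)),
        hNdet, hentry a a, mul_assoc]
      congr 1
      exact collapse u lam h5
    have k2 : eval lam (φb * ρ) = eval lam (φ * P v) := by
      rw [eval_mul, eval_mul, ← hdetb,
        det_del1 N b hUa (isUnit_iff_ne_zero.mpr (by rw [hdetb]; exact h3)),
        hNdet, hentry b b, mul_assoc]
      congr 1
      exact collapse v lam h5
    have k3 : eval lam (φab * (ρ * ρ)) = eval lam (φ * (P u * P v - P w * P w)) := by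
      have hwsum : ∑ θ ∈ Θ, (lam - θ)⁻¹ * E θ b a = ∑ θ ∈ Θ, (lam - θ)⁻¹ * w θ :=
        Finset.sum_congr rfl fun θ hθ => by rw [hba θ hθ, hw]
      have cu := collapse u lam h5
      have cv := collapse v lam h5
      have cw := collapse w lam h5
      have L : eval lam (φab * (ρ * ρ))
          = N.det * (N⁻¹ a a * N⁻¹ b b - N⁻¹ a b * N⁻¹ b a) * (eval lam ρ * eval lam ρ) := by
        rw [eval_mul, eval_mul, ← hdetab,
          det_del2 N a b hab hUa (isUnit_iff_ne_zero.mpr (by rw [hdetab]; exact h4)), mul_assoc]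
      have R : eval lam (φ * (P u * P v - P w * P w))
          = eval lam φ * (eval lam (P u) * eval lam (P v) - eval lam (P w) * eval lam (P w)) := by
        rw [eval_mul, eval_sub, eval_mul, eval_mul]
      rw [L, R, hNdet, hentry a a, hentry b b, hentry a b, hentry b a, hwsum,
        ← cu, ← cv, ← cw]
      simp only [hu, hv, hw]
      ring
    exact ⟨k1, k2, k3⟩
  -- polynomial identities
  have I1a : φa * ρ = φ * P u :=
    Polynomial.eq_of_infinite_eval_eq _ _ (hGinf.mono fun lam hlam => (key lam hlam).1)
  have I1b : φb * ρ = φ * P v :=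
    Polynomial.eq_of_infinite_eval_eq _ _ (hGinf.mono fun lam hlam => (key lam hlam).2.1)
  have I2 : φab * (ρ * ρ) = φ * (P u * P v - P w * P w) :=
    Polynomial.eq_of_infinite_eval_eq _ _ (hGinf.mono fun lam hlam => (key lam hlam).2.2)
  set Q : ℝ[X] := P u * P v - P w * P w with hQdef
  have hQ0 : Q ≠ 0 := by
    intro hc
    rw [hc, mul_zero] at I2
    exact mul_ne_zero hφab0 (mul_ne_zero hρ0 hρ0) I2
  have e1 : ∀ z : ℝ, φab.rootMultiplicity z + (ρ.rootMultiplicity z + ρ.rootMultiplicity z)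
      = φ.rootMultiplicity z + Q.rootMultiplicity z := by
    intro z
    have hc := congrArg (rootMultiplicity z) I2
    rwa [rootMultiplicity_mul (mul_ne_zero hφab0 (mul_ne_zero hρ0 hρ0)),
      rootMultiplicity_mul (mul_ne_zero hρ0 hρ0),
      rootMultiplicity_mul (mul_ne_zero hφ0 hQ0)] at hc
  have multρ1 : ∀ z ∈ Θ, ρ.rootMultiplicity z = 1 := by
    intro z hz
    have hfact : ρ = (X - C z) * ∏ η ∈ Θ.erase z, (X - C η) :=
      (Finset.mul_prod_erase Θ _ hz).symm
    have h2 : rootMultiplicity z (∏ η ∈ Θ.erase z, (X - C η)) = 0 := by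
      apply rootMultiplicity_eq_zero
      intro hroot
      rw [IsRoot, eval_prod] at hroot
      obtain ⟨η, hη, h0⟩ := Finset.prod_eq_zero_iff.mp hroot
      simp only [eval_sub, eval_X, eval_C] at h0
      exact (Finset.mem_erase.mp hη).1 (by linarith)
    rw [hfact, rootMultiplicity_mul (by rw [← hfact]; exact hρ0),
      rootMultiplicity_X_sub_C_self, h2]
  have multρ0 : ∀ z : ℝ, z ∉ Θ → ρ.rootMultiplicity z = 0 := by
    intro z hz
    apply rootMultiplicity_eq_zero
    intro hroot
    rw [hρdef, IsRoot, eval_prod] at hroot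
    obtain ⟨θ, hθ, h0⟩ := Finset.prod_eq_zero_iff.mp hroot
    simp only [eval_sub, eval_X, eval_C] at h0
    exact hz (by rwa [show θ = z by linarith] at hθ)
  -- the equivalence per θ
  have hsc : ∀ θ ∈ Θ,
      ((∃ ε : ℝ, (ε = 1 ∨ ε = -1) ∧ E θ *ᵥ Pi.single a 1 = ε • (E θ *ᵥ Pi.single b 1)) ↔
        (u θ = v θ ∧ u θ * v θ = w θ * w θ)) :=
    fun θ hθ => sc_pointwise (E θ) (hsymm θ hθ) (hidem θ hθ) a b
  constructor
  · intro hstrong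
    have hpt : ∀ θ ∈ Θ, u θ = v θ ∧ u θ * v θ = w θ * w θ :=
      fun θ hθ => (hsc θ hθ).mp (hstrong θ hθ)
    constructor
    · have hPuv : P u = P v := by
        rw [hPdef]
        exact Finset.sum_congr rfl fun θ hθ => by rw [(hpt θ hθ).1]
      have h2 : φa * ρ = φb * ρ := by rw [I1a, I1b, hPuv]
      exact mul_right_cancel₀ hρ0 h2
    · intro z
      have e := e1 z
      by_cases hz : z ∈ Θ
      · have hrm1 : ρ.rootMultiplicity z = 1 := multρ1 z hz
        have hQroot : eval z Q = 0 := by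
          obtain ⟨hq1, hq2⟩ := hpt z hz
          have hzz : u z * v z - w z * w z = 0 := by rw [hq2, sub_self]
          have h9 : eval z Q = (u z * v z - w z * w z)
              * ((∏ η ∈ Θ.erase z, (z - η)) * ∏ η ∈ Θ.erase z, (z - η)) := by
            rw [hQdef, eval_sub, eval_mul, eval_mul, evalP u z hz, evalP v z hz, evalP w z hz]
            ring
          rw [h9, hzz, zero_mul]
        have hQpos : 1 ≤ Q.rootMultiplicity z := (rootMultiplicity_pos hQ0).mpr hQroot
        omega
      · have hrm0 : ρ.rootMultiplicity z = 0 := multρ0 z hz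
        omega
  · rintro ⟨hcs, hmult⟩ θ₀ hθ₀
    apply (hsc θ₀ hθ₀).mpr
    have hPuv : P u = P v := by
      have h2 : φ * P u = φ * P v := by rw [← I1a, ← I1b, hcs]
      exact mul_left_cancel₀ hφ0 h2
    have h3 := congrArg (eval θ₀) hPuv
    rw [evalP u θ₀ hθ₀, evalP v θ₀ hθ₀] at h3
    have huv : u θ₀ = v θ₀ := mul_right_cancel₀ (hρerase θ₀ hθ₀) h3
    have e := e1 θ₀
    have hρ1 := multρ1 θ₀ hθ₀
    have hm := hmult θ₀
    have hQpos : 0 < Q.rootMultiplicity θ₀ := by omega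
    have hQroot : eval θ₀ Q = 0 := (rootMultiplicity_pos hQ0).mp hQpos
    rw [hQdef, eval_sub, eval_mul, eval_mul, evalP u θ₀ hθ₀, evalP v θ₀ hθ₀,
      evalP w θ₀ hθ₀] at hQroot
    have hfac : (u θ₀ * v θ₀ - w θ₀ * w θ₀)
        * ((∏ η ∈ Θ.erase θ₀, (θ₀ - η)) * ∏ η ∈ Θ.erase θ₀, (θ₀ - η)) = 0 := by
      rw [← hQroot]; ring
    have hprod0 : ((∏ η ∈ Θ.erase θ₀, (θ₀ - η)) * ∏ η ∈ Θ.erase θ₀, (θ₀ - η)) ≠ 0 :=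
      mul_ne_zero (hρerase θ₀ hθ₀) (hρerase θ₀ hθ₀)
    have : u θ₀ * v θ₀ - w θ₀ * w θ₀ = 0 := by
      rcases mul_eq_zero.mp hfac with h | h
      · exact h
      · exact absurd h hprod0
    exact ⟨huv, by linarith [this]⟩
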